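/- The transformation t̃ = T(t) = ∫Σ^{-1/2}dt, z̃ = z, F = Σ^{-1/2}·F̃(z̃, t̃), where Σ' = σ and Σ > 0, maps solutions of the generalized Burgers equation F_t + FF_z + F_zz + (Σ'/(2Σ))F = 0 to solutions of F̃_t̃ + F̃F̃_z̃ + Σ^{1/2}F̃_z̃z̃ = 0 (with Σ expressed as a function of t̃). -/

import Mathlib

/-- The transformation `t̃ = T(t)` with `T' = Σ^{-1/2}`, `z̃ = z`, `F = Σ^{-1/2} F̃`
maps solutions of the generalized Burgers equation
`F_t + F F_z + F_zz + (Σ'/(2Σ)) F = 0` to solutions of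
`F̃_t̃ + F̃ F̃_z̃ + g̃(t̃) F̃_z̃z̃ = 0` with `g̃(T(t)) = Σ(t)^{1/2}`. -/
theorem burgers_transformation (lo hi : ℝ) (hlo : lo < hi)
    (σ Sig T : ℝ → ℝ)
    (hσ : ContinuousOn σ (Set.Ioo lo hi))
    (hSig : ∀ t ∈ Set.Ioo lo hi, HasDerivAt Sig (σ t) t)
    (hSigpos : ∀ t ∈ Set.Ioo lo hi, 0 < Sig t)
    (hT : ∀ t ∈ Set.Ioo lo hi, HasDerivAt T ((Real.sqrt (Sig t))⁻¹) t)
    (F : ℝ → ℝ → ℝ)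
    (hF : ContDiff ℝ 2 (fun p : ℝ × ℝ => F p.1 p.2))
    (hsol : ∀ z : ℝ, ∀ t ∈ Set.Ioo lo hi,
      deriv (fun t' => F z t') t + F z t * deriv (fun z' => F z' t) z
        + deriv (deriv (fun z' => F z' t)) z + (σ t / (2 * Sig t)) * F z t = 0)
    (G : ℝ → ℝ → ℝ) (g' : ℝ → ℝ)
    (hGC : ContDiff ℝ 2 (fun p : ℝ × ℝ => G p.1 p.2))
    (hG : ∀ z : ℝ, ∀ t ∈ Set.Ioo lo hi, G z (T t) = Real.sqrt (Sig t) * F z t)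
    (hg' : ∀ t ∈ Set.Ioo lo hi, g' (T t) = Real.sqrt (Sig t)) :
    ∀ z : ℝ, ∀ t ∈ Set.Ioo lo hi,
      deriv (fun s => G z s) (T t)
        + G z (T t) * deriv (fun z' => G z' (T t)) z
        + g' (T t) * deriv (deriv (fun z' => G z' (T t))) z = 0 := by
  intro z t ht
  have hSpos : 0 < Real.sqrt (Sig t) := Real.sqrt_pos.mpr (hSigpos t ht)
  set S := Real.sqrt (Sig t) with hS
  have hS2 : S * S = Sig t := Real.mul_self_sqrt (le_of_lt (hSigpos t ht))
  -- spatial derivatives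
  have hzfun : (fun z' => G z' (T t)) = fun z' => S * F z' t := by
    funext z'; exact hG z' t ht
  have hderiv1 : deriv (fun z' => G z' (T t)) z = S * deriv (fun z' => F z' t) z := by
    rw [hzfun, deriv_const_mul_field]
  have hderivfun : deriv (fun z' => G z' (T t)) = fun z' => S * deriv (fun z'' => F z'' t) z' := by
    funext z'; rw [hzfun, deriv_const_mul_field]
  have hderiv2 : deriv (deriv (fun z' => G z' (T t))) z
      = S * deriv (deriv (fun z' => F z' t)) z := by
    rw [hderivfun, deriv_const_mul_field]
  -- time derivative of F
  have hFd : Differentiable ℝ (fun p : ℝ × ℝ => F p.1 p.2) := hF.differentiable (by norm_num)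
  have hFt : HasDerivAt (fun t' => F z t') (deriv (fun t' => F z t') t) t := by
    have : DifferentiableAt ℝ (fun t' => F z t') t := by
      have := (hFd.comp ((differentiable_const z).prodMk differentiable_id)).differentiableAt
        (x := t)
      simpa [Function.comp_def] using this
    exact this.hasDerivAt
  -- derivative of sqrt(Sig)
  have hSd : HasDerivAt (fun t' => Real.sqrt (Sig t')) (σ t / (2 * S)) t :=
    (hSig t ht).sqrt (ne_of_gt (hSigpos t ht))
  have hprod : HasDerivAt (fun t' => Real.sqrt (Sig t') * F z t')
      (σ t / (2 * S) * F z t + S * deriv (fun t' => F z t') t) t := by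
    simpa [hS, Pi.mul_def] using hSd.mul hFt
  -- time derivative of G
  have hGd : Differentiable ℝ (fun p : ℝ × ℝ => G p.1 p.2) := hGC.differentiable (by norm_num)
  have hGt : HasDerivAt (fun s => G z s) (deriv (fun s => G z s) (T t)) (T t) := by
    have : DifferentiableAt ℝ (fun s => G z s) (T t) := by
      have := (hGd.comp ((differentiable_const z).prodMk differentiable_id)).differentiableAt
        (x := T t)
      simpa [Function.comp_def] using this
    exact this.hasDerivAt
  have hcomp : HasDerivAt (fun t' => G z (T t')) (deriv (fun s => G z s) (T t) * S⁻¹) t :=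
    hGt.comp t (hT t ht)
  have heq : (fun t' => G z (T t')) =ᶠ[nhds t] fun t' => Real.sqrt (Sig t') * F z t' := by
    filter_upwards [Ioo_mem_nhds ht.1 ht.2] with x hx
    exact hG z x hx
  have hcomp' : HasDerivAt (fun t' => Real.sqrt (Sig t') * F z t')
      (deriv (fun s => G z s) (T t) * S⁻¹) t := hcomp.congr_of_eventuallyEq heq.symm
  have huniq : deriv (fun s => G z s) (T t) * S⁻¹
      = σ t / (2 * S) * F z t + S * deriv (fun t' => F z t') t := hcomp'.unique hprod
  have hGTderiv : deriv (fun s => G z s) (T t)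
      = S * (σ t / (2 * S) * F z t + S * deriv (fun t' => F z t') t) := by
    have hSne : S ≠ 0 := ne_of_gt hSpos
    field_simp at huniq
    field_simp
    linarith [huniq]
  have hE := hsol z t ht
  rw [hGTderiv, hderiv1, hderiv2, hG z t ht, hg' t ht, ← hS]
  have hSne : S ≠ 0 := ne_of_gt hSpos
  have hSigne : Sig t ≠ 0 := ne_of_gt (hSigpos t ht)
  field_simp at hE ⊢
  linear_combination hE + 2 *
    (deriv (fun t' => F z t') t + F z t * deriv (fun z' => F z' t) z +
      deriv (deriv fun z' => F z' t) z) * hS2
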